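/- If X is a Moore space, then every subspace Y ⊆ X has density d(Y) ≤ e(X), where e(X) is the supremum of cardinalities of closed discrete subspaces of X; hence hd(X) ≤ e(X). -/

import Mathlib

open Cardinal

namespace Stmt8

universe u

variable (X : Type u) [TopologicalSpace X]

def star' (A : Set X) (C : Set (Set X)) : Set X := ⋃₀ {U | U ∈ C ∧ (U ∩ A).Nonempty}

/-- A `𝒰`-separated set is closed and discrete. -/
lemma sep_closed_discrete [T1Space X] (𝒰n : Set (Set X))
    (hopen : ∀ U ∈ 𝒰n, IsOpen U) (hcov : ⋃₀ 𝒰n = Set.univ)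
    (A : Set X) (hA : ∀ U ∈ 𝒰n, (U ∩ A).Subsingleton) :
    IsClosed A ∧ DiscreteTopology A := by
  have hmem : ∀ x : X, ∃ U ∈ 𝒰n, x ∈ U := by
    intro x
    have : x ∈ ⋃₀ 𝒰n := hcov ▸ Set.mem_univ x
    simpa [Set.mem_sUnion] using this
  constructor
  · rw [← isOpen_compl_iff, isOpen_iff_mem_nhds]
    intro x hx
    obtain ⟨U, hU, hxU⟩ := hmem x
    rcases (U ∩ A).eq_empty_or_nonempty with hE | ⟨a, haU, haA⟩
    · refine Filter.mem_of_superset ((hopen U hU).mem_nhds hxU) ?_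
      intro z hz hzA
      exact Set.eq_empty_iff_forall_notMem.mp hE z ⟨hz, hzA⟩
    · have hax : a ≠ x := fun h => hx (h ▸ haA)
      refine Filter.mem_of_superset (((hopen U hU).sdiff isClosed_singleton).mem_nhds
        ⟨hxU, fun h => hax (h.symm)⟩) ?_
      intro z ⟨hzU, hza⟩ hzA
      exact hza (hA U hU ⟨hzU, hzA⟩ ⟨haU, haA⟩)
  · rw [discreteTopology_iff_isOpen_singleton]
    rintro ⟨a, ha⟩
    obtain ⟨U, hU, haU⟩ := hmem a
    rw [isOpen_induced_iff]
    refine ⟨U, hopen U hU, ?_⟩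
    ext ⟨z, hz⟩
    simp only [Set.mem_preimage, Set.mem_singleton_iff, Subtype.ext_iff]
    exact ⟨fun hzU => hA U hU ⟨hzU, hz⟩ ⟨haU, ha⟩, fun h => h ▸ haU⟩

theorem hereditaryDensity_le_extent_of_Moore [T1Space X] [RegularSpace X]
    (𝒰 : ℕ → Set (Set X))
    (hopen : ∀ n, ∀ U ∈ 𝒰 n, IsOpen U)
    (hcov : ∀ n, ⋃₀ 𝒰 n = Set.univ)
    (hbase : ∀ x : X, ∀ N ∈ nhds x, ∃ n, star' X {x} (𝒰 n) ⊆ N)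
    (κ : Cardinal.{u})
    (he : ∀ D : Set X, IsClosed D → DiscreteTopology D → #D ≤ κ) :
    ∀ Y : Set X, ∃ A : Set X, A ⊆ Y ∧ #A ≤ κ ∧ Y ⊆ closure A := by
  intro Y
  by_cases hκ : ℵ₀ ≤ κ
  · -- For each n, take a maximal 𝒰 n-separated subset of Y.
    have hzorn : ∀ n : ℕ, ∃ A : Set X, (A ⊆ Y ∧ ∀ U ∈ 𝒰 n, (U ∩ A).Subsingleton) ∧
        ∀ y ∈ Y, (∀ U ∈ 𝒰 n, (U ∩ insert y A).Subsingleton) → y ∈ A := by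
      intro n
      have hchainub : ∀ c ⊆ {A : Set X | A ⊆ Y ∧ ∀ U ∈ 𝒰 n, (U ∩ A).Subsingleton},
          IsChain (· ⊆ ·) c → ∃ ub ∈ {A : Set X | A ⊆ Y ∧ ∀ U ∈ 𝒰 n, (U ∩ A).Subsingleton},
            ∀ s ∈ c, s ⊆ ub := by
        intro c hc hchain
        refine ⟨⋃₀ c, ⟨Set.sUnion_subset fun s hs => (hc hs).1, ?_⟩,
          fun s hs => Set.subset_sUnion_of_mem hs⟩
        rintro U hU x ⟨hxU, hx⟩ y ⟨hyU, hy⟩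
        obtain ⟨s, hs, hxs⟩ := hx
        obtain ⟨t, ht, hyt⟩ := hy
        rcases hchain.total hs ht with h | h
        · exact (hc ht).2 U hU ⟨hxU, h hxs⟩ ⟨hyU, hyt⟩
        · exact (hc hs).2 U hU ⟨hxU, hxs⟩ ⟨hyU, h hyt⟩
      obtain ⟨m, hm⟩ := zorn_subset
        {A : Set X | A ⊆ Y ∧ ∀ U ∈ 𝒰 n, (U ∩ A).Subsingleton} hchainub
      refine ⟨m, hm.prop, fun y hy hsep => ?_⟩
      have : insert y m ⊆ m :=
        hm.2 ⟨Set.insert_subset hy hm.prop.1, hsep⟩ (Set.subset_insert y m)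
      exact this (Set.mem_insert y m)
    choose A hA hMax using hzorn
    refine ⟨⋃ n, A n, Set.iUnion_subset fun n => (hA n).1, ?_, ?_⟩
    · have heq : (⋃ n, A n) = ⋃ i : ULift.{u} ℕ, A i.down := by
        ext x
        simp only [Set.mem_iUnion]
        exact ⟨fun ⟨n, h⟩ => ⟨⟨n⟩, h⟩, fun ⟨i, h⟩ => ⟨i.down, h⟩⟩
      rw [heq]
      calc #(⋃ i : ULift.{u} ℕ, A i.down) ≤ #(ULift.{u} ℕ) * ⨆ i : ULift.{u} ℕ, #(A i.down) :=
            mk_iUnion_le _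
        _ ≤ ℵ₀ * κ := by
            refine mul_le_mul' (mk_eq_aleph0 _).le (ciSup_le fun i => ?_)
            obtain ⟨h1, h2⟩ := sep_closed_discrete X (𝒰 i.down) (hopen i.down) (hcov i.down)
              (A i.down) (hA i.down).2
            exact he (A i.down) h1 h2
        _ ≤ κ * κ := mul_le_mul' hκ le_rfl
        _ = κ := mul_eq_self hκ
    · intro y hy
      rw [mem_closure_iff_nhds]
      intro N hN
      obtain ⟨n, hn⟩ := hbase y N hN
      by_cases hyA : y ∈ A n
      · exact ⟨y, mem_of_mem_nhds hN, Set.mem_iUnion.mpr ⟨n, hyA⟩⟩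
      · have hns : ¬ ∀ U ∈ 𝒰 n, (U ∩ insert y (A n)).Subsingleton :=
          fun h => hyA (hMax n y hy h)
        push_neg at hns
        obtain ⟨U, hU, hnsub⟩ := hns
        obtain ⟨a, ⟨haU, haI⟩, b, ⟨hbU, hbI⟩, hab⟩ := hnsub
        -- one of a, b is in A n and in U, and y ∈ U
        have key : ∃ z ∈ A n, z ∈ U ∧ y ∈ U := by
          rcases haI with rfl | haA
          · rcases hbI with rfl | hbA
            · exact absurd rfl hab
            · exact ⟨b, hbA, hbU, haU⟩
          · rcases hbI with rfl | hbA
            · exact ⟨a, haA, haU, hbU⟩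
            · exact absurd ((hA n).2 U hU ⟨haU, haA⟩ ⟨hbU, hbA⟩) hab
        obtain ⟨z, hzA, hzU, hyU⟩ := key
        refine ⟨z, hn ⟨U, ⟨hU, ⟨y, hyU, rfl⟩⟩, hzU⟩, Set.mem_iUnion.mpr ⟨n, hzA⟩⟩
  · -- κ < ℵ₀ : then X itself has at most κ elements (finite sets are closed discrete in T1)
    have hXκ : #X ≤ κ := by
      by_contra h
      push_neg at h
      obtain ⟨n, rfl⟩ := Cardinal.lt_aleph0.mp (lt_of_not_ge hκ)
      have hle : ((n + 1 : ℕ) : Cardinal) ≤ #X := by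
        have hns := Cardinal.nat_succ n
        rw [Nat.succ_eq_add_one] at hns
        rw [hns]
        exact Order.succ_le_of_lt h
      obtain ⟨s, hs⟩ := Cardinal.le_mk_iff_exists_set.mp hle
      have hs' : #s < ℵ₀ := hs ▸ Cardinal.nat_lt_aleph0 (n + 1)
      have hfin : Finite s := Cardinal.lt_aleph0_iff_finite.mp hs'
      have hsfin : s.Finite := Set.finite_coe_iff.mp hfin
      have hle2 := he s hsfin.isClosed inferInstance
      rw [hs] at hle2
      exact (Nat.cast_lt.mpr (Nat.lt_succ_self n)).not_ge hle2
    exact ⟨Y, le_rfl, (Cardinal.mk_le_mk_of_subset (Set.subset_univ Y)).trans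
      ((Cardinal.mk_univ).le.trans hXκ), subset_closure⟩

end Stmt8
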